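/- arXiv:1104.4721 — 2 statements merged into one kernel-verified Lean document; each statement's English description precedes it below -/
import Mathlib

section
/- For every integer n ≥ 0, ∫₀^∞ xⁿ ln(x+1) e^{-x} dx = ∑_{j=0}^{n} (n!/j!) (-1)^j (∑_{i=0}^{j-1} (-1)^{i+1} i! + δ). -/
open MeasureTheory Real Set Filter

section aux

lemma intOn_pow_exp (n : ℕ) : IntegrableOn (fun x : ℝ => x ^ n * Real.exp (-x)) (Set.Ioi 0) := by
  have h := Real.GammaIntegral_convergent (s := n + 1) (by positivity)
  refine h.congr_fun (fun x hx => ?_) measurableSet_Ioi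
  simp only [add_sub_cancel_right, Real.rpow_natCast]
  ring

lemma contOn_I (n : ℕ) : ContinuousOn (fun x : ℝ => x ^ n * Real.log (x + 1) * Real.exp (-x)) (Set.Ioi 0) := by
  apply ContinuousOn.mul
  apply ContinuousOn.mul (continuousOn_pow n)
  · exact Real.continuousOn_log.comp (by fun_prop) (fun x hx => by simp [Set.mem_Ioi] at hx ⊢; intro h; linarith)
  · fun_prop

lemma intOn_I (n : ℕ) : IntegrableOn (fun x : ℝ => x ^ n * Real.log (x + 1) * Real.exp (-x)) (Set.Ioi 0) := by
  refine ((intOn_pow_exp (n+1)).mono' ((contOn_I n).aestronglyMeasurable measurableSet_Ioi) ?_)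
  filter_upwards [ae_restrict_mem measurableSet_Ioi] with x hx
  have hx' : (0:ℝ) < x := hx
  have hl : 0 ≤ Real.log (x+1) := Real.log_nonneg (by linarith)
  have hl2 : Real.log (x+1) ≤ x := by
    have := Real.log_le_sub_one_of_pos (x := x + 1) (by linarith); linarith
  rw [Real.norm_eq_abs, abs_of_nonneg (mul_nonneg (mul_nonneg (by positivity) hl) (by positivity))]
  have : x ^ (n+1) * Real.exp (-x) = x ^ n * x * Real.exp (-x) := by ring
  rw [this]
  exact mul_le_mul_of_nonneg_right (mul_le_mul_of_nonneg_left hl2 (by positivity)) (by positivity)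

lemma intOn_J (n : ℕ) : IntegrableOn (fun x : ℝ => x ^ n * Real.exp (-x) / (x + 1)) (Set.Ioi 0) := by
  refine ((intOn_pow_exp n).mono' ?_ ?_)
  · apply ContinuousOn.aestronglyMeasurable ?_ measurableSet_Ioi
    apply ContinuousOn.div (by fun_prop) (by fun_prop)
    intro x hx; have : (0:ℝ) < x := hx; intro h; linarith [h]
  filter_upwards [ae_restrict_mem measurableSet_Ioi] with x hx
  have hx' : (0:ℝ) < x := hx
  have h1 : (1:ℝ) ≤ x + 1 := by linarith
  rw [Real.norm_eq_abs, abs_of_nonneg (by positivity)]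
  exact div_le_self (by positivity) h1

lemma intOn_delta : IntegrableOn (fun x : ℝ => Real.log (x + 1) * Real.exp (-x)) (Set.Ioi 0) := by
  have := intOn_I 0
  simpa using this

lemma intOn_J0 : IntegrableOn (fun x : ℝ => Real.exp (-x) / (x + 1)) (Set.Ioi 0) := by
  have := intOn_J 0
  simpa using this

lemma tend_I (n : ℕ) :
    Tendsto (fun x : ℝ => x ^ n * Real.exp (-x) * Real.log (x + 1)) atTop (nhds 0) := by
  have h := tendsto_pow_mul_exp_neg_atTop_nhds_zero (n + 1)
  apply squeeze_zero' (g := fun x : ℝ => x ^ (n+1) * Real.exp (-x)) ?_ ?_ h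
  · filter_upwards [eventually_ge_atTop (0:ℝ)] with x hx
    have := Real.log_nonneg (x := x + 1) (by linarith)
    positivity
  · filter_upwards [eventually_ge_atTop (0:ℝ)] with x hx
    have hl : Real.log (x + 1) ≤ x := by
      have := Real.log_le_sub_one_of_pos (x := x + 1) (by linarith); linarith
    calc x ^ n * Real.exp (-x) * Real.log (x+1) ≤ x ^ n * Real.exp (-x) * x :=
          mul_le_mul_of_nonneg_left hl (by positivity)
      _ = x ^ (n+1) * Real.exp (-x) := by ring

lemma hderiv (n : ℕ) (x : ℝ) (hx : 0 ≤ x) :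
    HasDerivAt (fun x : ℝ => x ^ (n+1) * Real.exp (-x) * Real.log (x + 1))
      ((n+1 : ℝ) * (x ^ n * Real.log (x + 1) * Real.exp (-x))
        - x ^ (n+1) * Real.log (x + 1) * Real.exp (-x)
        + x ^ (n+1) * Real.exp (-x) / (x + 1)) x := by
  have h1 : HasDerivAt (fun x : ℝ => x ^ (n+1)) ((n+1 : ℝ) * x ^ n) x := by
    simpa using hasDerivAt_pow (n+1) x
  have h2 : HasDerivAt (fun x : ℝ => Real.exp (-x)) (-Real.exp (-x)) x := by
    simpa [Function.comp_def] using (Real.hasDerivAt_exp (-x)).comp x (hasDerivAt_neg x)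
  have h3 : HasDerivAt (fun x : ℝ => Real.log (x + 1)) (1 / (x + 1)) x := by
    have := (Real.hasDerivAt_log (x := x + 1) (by linarith)).comp x
      ((hasDerivAt_id x).add_const 1)
    simpa [one_div, Function.comp_def] using this
  have := ((h1.mul h2).mul h3)
  refine this.congr_deriv ?_
  have hx1 : x + 1 ≠ 0 := by linarith
  simp only [Pi.mul_apply]
  ring

lemma hderiv0 (x : ℝ) (hx : 0 ≤ x) :
    HasDerivAt (fun x : ℝ => Real.exp (-x) * Real.log (x + 1))
      (- (Real.log (x + 1) * Real.exp (-x)) + Real.exp (-x) / (x + 1)) x := by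
  have h2 : HasDerivAt (fun x : ℝ => Real.exp (-x)) (-Real.exp (-x)) x := by
    simpa [Function.comp_def] using (Real.hasDerivAt_exp (-x)).comp x (hasDerivAt_neg x)
  have h3 : HasDerivAt (fun x : ℝ => Real.log (x + 1)) (1 / (x + 1)) x := by
    have := (Real.hasDerivAt_log (x := x + 1) (by linarith)).comp x
      ((hasDerivAt_id x).add_const 1)
    simpa [one_div, Function.comp_def] using this
  refine (h2.mul h3).congr_deriv ?_
  have hx1 : x + 1 ≠ 0 := by linarith
  ring

lemma J0_eq : (∫ x in Set.Ioi (0:ℝ), Real.exp (-x) / (x + 1))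
    = ∫ x in Set.Ioi (0:ℝ), Real.log (x + 1) * Real.exp (-x) := by
  have key : ∫ x in Set.Ioi (0:ℝ),
      (- (Real.log (x + 1) * Real.exp (-x)) + Real.exp (-x) / (x + 1)) = 0 := by
    rw [integral_Ioi_of_hasDerivAt_of_tendsto' (m := 0)
      (f := fun x : ℝ => Real.exp (-x) * Real.log (x + 1))
      (fun x hx => hderiv0 x hx) (intOn_delta.neg.add intOn_J0)]
    · simp
    · have := tend_I 0
      simpa using this
  have hneg : IntegrableOn (fun x : ℝ => -(Real.log (x + 1) * Real.exp (-x))) (Set.Ioi 0) :=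
    intOn_delta.neg
  rw [integral_add hneg intOn_J0, integral_neg] at key
  linarith

lemma keyrec (n : ℕ) :
    (∫ x in Set.Ioi (0:ℝ), x ^ (n+1) * Real.log (x + 1) * Real.exp (-x))
      = (n+1 : ℝ) * (∫ x in Set.Ioi (0:ℝ), x ^ n * Real.log (x + 1) * Real.exp (-x))
        + ∫ x in Set.Ioi (0:ℝ), x ^ (n+1) * Real.exp (-x) / (x + 1) := by
  have key : ∫ x in Set.Ioi (0:ℝ),
      ((n+1 : ℝ) * (x ^ n * Real.log (x + 1) * Real.exp (-x))
        - x ^ (n+1) * Real.log (x + 1) * Real.exp (-x)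
        + x ^ (n+1) * Real.exp (-x) / (x + 1)) = 0 := by
    rw [integral_Ioi_of_hasDerivAt_of_tendsto' (m := 0)
      (f := fun x : ℝ => x ^ (n+1) * Real.exp (-x) * Real.log (x + 1))
      (fun x hx => hderiv n x hx)
      ((((intOn_I n).const_mul _).sub (intOn_I (n+1))).add (intOn_J (n+1)))]
    · simp
    · exact tend_I (n+1)
  have hc : IntegrableOn (fun x : ℝ => (n+1:ℝ) * (x ^ n * Real.log (x + 1) * Real.exp (-x)))
      (Set.Ioi 0) := (intOn_I n).const_mul _
  have h1 : IntegrableOn (fun x : ℝ => (n+1:ℝ) * (x ^ n * Real.log (x + 1) * Real.exp (-x))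
      - x ^ (n+1) * Real.log (x + 1) * Real.exp (-x)) (Set.Ioi 0) := hc.sub (intOn_I (n+1))
  rw [integral_add h1 (intOn_J (n+1)), integral_sub hc (intOn_I (n+1)),
    integral_const_mul] at key
  linarith

lemma Jfact (n : ℕ) :
    (∫ x in Set.Ioi (0:ℝ), x ^ n * Real.exp (-x)) = (Nat.factorial n : ℝ) := by
  have h := Real.Gamma_eq_integral (s := (n:ℝ) + 1) (by positivity)
  have h2 : Real.Gamma ((n:ℝ) + 1) = (Nat.factorial n : ℝ) := by
    exact_mod_cast Real.Gamma_nat_eq_factorial n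
  rw [h2] at h
  refine Eq.trans ?_ h.symm
  apply setIntegral_congr_fun measurableSet_Ioi
  intro x hx
  have hx' : (0:ℝ) < x := hx
  simp only [add_sub_cancel_right]
  rw [Real.rpow_natCast]
  ring

lemma Jrec (n : ℕ) :
    (∫ x in Set.Ioi (0:ℝ), x ^ (n+1) * Real.exp (-x) / (x + 1))
      = (Nat.factorial n : ℝ) - ∫ x in Set.Ioi (0:ℝ), x ^ n * Real.exp (-x) / (x + 1) := by
  have : ∀ x ∈ Set.Ioi (0:ℝ),
      x ^ (n+1) * Real.exp (-x) / (x + 1)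
        = x ^ n * Real.exp (-x) - x ^ n * Real.exp (-x) / (x + 1) := by
    intro x hx
    have hx' : (0:ℝ) < x := hx
    have hx1 : x + 1 ≠ 0 := by linarith
    field_simp
    ring
  rw [setIntegral_congr_fun measurableSet_Ioi this,
    integral_sub (intOn_pow_exp n) (intOn_J n), Jfact n]

lemma Jclosed (n : ℕ) :
    (∫ x in Set.Ioi (0:ℝ), x ^ n * Real.exp (-x) / (x + 1))
      = (-1 : ℝ) ^ n * ((∑ i ∈ Finset.range n, (-1 : ℝ) ^ (i + 1) * (Nat.factorial i : ℝ))
          + ∫ x in Set.Ioi (0:ℝ), Real.log (x + 1) * Real.exp (-x)) := by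
  induction n with
  | zero => simpa using J0_eq
  | succ n ih =>
    rw [Jrec n, ih, Finset.sum_range_succ, pow_succ]
    have ha : ((-1:ℝ)^n) * ((-1:ℝ)^n) = 1 := by
      rw [← pow_add]; exact Even.neg_one_pow ⟨n, rfl⟩
    linear_combination (-(Nat.factorial n : ℝ)) * ha

lemma sum_step (d : ℝ) (n : ℕ) :
    ∑ j ∈ Finset.range (n + 2),
        ((Nat.factorial (n+1) : ℝ) / (Nat.factorial j : ℝ)) * (-1 : ℝ) ^ j *
          ((∑ i ∈ Finset.range j, (-1 : ℝ) ^ (i + 1) * (Nat.factorial i : ℝ)) + d)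
      = (n + 1 : ℝ) * ∑ j ∈ Finset.range (n + 1),
          ((Nat.factorial n : ℝ) / (Nat.factorial j : ℝ)) * (-1 : ℝ) ^ j *
            ((∑ i ∈ Finset.range j, (-1 : ℝ) ^ (i + 1) * (Nat.factorial i : ℝ)) + d)
        + (-1 : ℝ) ^ (n + 1) *
            ((∑ i ∈ Finset.range (n+1), (-1 : ℝ) ^ (i + 1) * (Nat.factorial i : ℝ)) + d) := by
  rw [Finset.sum_range_succ, Finset.mul_sum]
  congr 1
  · apply Finset.sum_congr rfl
    intro j hj
    have hfac : ((Nat.factorial (n+1) : ℝ)) = (n+1 : ℝ) * (Nat.factorial n : ℝ) := by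
      push_cast [Nat.factorial_succ]; ring
    rw [hfac]; ring
  · have hne : ((Nat.factorial (n+1) : ℝ)) ≠ 0 := by positivity
    rw [div_self hne]; ring

end aux

theorem stmt1 (n : ℕ) :
    ∫ x in Set.Ioi (0:ℝ), x ^ n * Real.log (x + 1) * Real.exp (-x) =
      ∑ j ∈ Finset.range (n + 1),
        ((Nat.factorial n : ℝ) / (Nat.factorial j : ℝ)) * (-1 : ℝ) ^ j *
          ((∑ i ∈ Finset.range j, (-1 : ℝ) ^ (i + 1) * (Nat.factorial i : ℝ)) +
            ∫ x in Set.Ioi (0:ℝ), Real.log (x + 1) * Real.exp (-x)) := by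
  induction n with
  | zero =>
    simp [Nat.factorial]
  | succ n ih =>
    rw [keyrec n, ih, Jclosed (n+1), sum_step]
end

section
/- For each fixed integer r ≥ 0, lim_{m→∞} ∑_{k=r}^{m} C(m,k) C(k,r) ((-1)^{k+r}/k!) ∫₀^∞ x^k e^{-x}/(x+1) dx = 0. -/
open MeasureTheory Real Filter Set Topology
lemma intPow (k : ℕ) : IntegrableOn (fun x : ℝ => x ^ k * Real.exp (-x)) (Ioi 0) := by
  have h := Real.GammaIntegral_convergent (s := (k + 1 : ℝ)) (by positivity)
  refine (h.congr_fun ?_ measurableSet_Ioi)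
  intro x hx
  simp only [add_sub_cancel_right]
  rw [Real.rpow_natCast, mul_comm]

lemma valPow (k : ℕ) : ∫ x in Ioi (0:ℝ), x ^ k * Real.exp (-x) = k.factorial := by
  have h := Real.Gamma_eq_integral (s := (k + 1 : ℝ)) (by positivity)
  rw [Real.Gamma_nat_eq_factorial] at h
  rw [h]
  refine setIntegral_congr_fun measurableSet_Ioi (fun x hx => ?_)
  simp only [add_sub_cancel_right]
  rw [Real.rpow_natCast, mul_comm]

lemma intA (k : ℕ) : IntegrableOn (fun x : ℝ => x ^ k * Real.exp (-x) / (x + 1)) (Ioi 0) := by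
  refine (intPow k).mono' ?_ ?_
  · exact (((measurable_id.pow_const k).mul (measurable_exp.comp measurable_neg)).div
      (measurable_id.add_const 1)).aestronglyMeasurable
  · filter_upwards [self_mem_ae_restrict measurableSet_Ioi] with x hx
    have hx0 : (0:ℝ) < x := hx
    have h1 : (1:ℝ) ≤ x + 1 := by linarith
    rw [Real.norm_eq_abs, abs_div, abs_of_nonneg (by positivity), abs_of_nonneg (by positivity)]
    exact div_le_self (by positivity) h1

lemma intExpNeg : IntegrableOn (fun t : ℝ => Real.exp (-t)) (Ioi 0) := by
  have := exp_neg_integrableOn_Ioi (0:ℝ) (b := 1) one_pos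
  refine this.congr_fun (fun x _ => by norm_num) measurableSet_Ioi

lemma intB (k : ℕ) : IntegrableOn (fun t : ℝ => Real.exp (-t) / (1 + t) ^ (k+1)) (Ioi 0) := by
  refine intExpNeg.mono' ?_ ?_
  · exact ((measurable_exp.comp measurable_neg).div
      ((measurable_const.add measurable_id).pow_const (k+1))).aestronglyMeasurable
  · filter_upwards [self_mem_ae_restrict measurableSet_Ioi] with t ht
    have ht0 : (0:ℝ) < t := ht
    have h1 : (1:ℝ) ≤ (1 + t) ^ (k+1) := one_le_pow₀ (by linarith)
    rw [Real.norm_eq_abs, abs_div, abs_of_nonneg (Real.exp_pos _).le, abs_of_nonneg (by positivity)]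
    exact div_le_self (Real.exp_pos _).le h1
lemma recB (k : ℕ) :
    (∫ t in Ioi (0:ℝ), Real.exp (-t) / (1 + t) ^ (k+1)) +
      (k+1 : ℝ) * ∫ t in Ioi (0:ℝ), Real.exp (-t) / (1 + t) ^ (k+2) = 1 := by
  set f : ℝ → ℝ := fun t => -Real.exp (-t) / (1 + t) ^ (k+1) with hf
  set f' : ℝ → ℝ := fun t => Real.exp (-t) / (1 + t) ^ (k+1)
      + (k+1 : ℝ) * (Real.exp (-t) / (1 + t) ^ (k+2)) with hf'
  have hderiv : ∀ t ∈ Ici (0:ℝ), HasDerivAt f (f' t) t := by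
    intro t ht
    have ht0 : (0:ℝ) ≤ t := ht
    have hne : (1 + t) ≠ 0 := by positivity
    have h1 : HasDerivAt (fun t : ℝ => -Real.exp (-t)) (Real.exp (-t)) t := by
      have := (Real.hasDerivAt_exp (-t)).comp t (hasDerivAt_neg t)
      simpa [Function.comp_def, Pi.neg_def] using this.neg
    have h2 : HasDerivAt (fun t : ℝ => (1 + t) ^ (k+1)) ((k+1 : ℝ) * (1 + t) ^ k) t := by
      have := ((hasDerivAt_pow (k+1) (1 + t)).comp t ((hasDerivAt_id t).const_add 1))
      simpa [Function.comp_def] using this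
    have h3 := h1.div h2 (pow_ne_zero _ hne)
    convert h3 using 1
    · rfl
    · rfl
    · rfl
    rw [hf']
    field_simp
    ring
  have hint : IntegrableOn f' (Ioi (0:ℝ)) := by
    exact (intB k).add ((intB (k+1)).const_mul _)
  have htend : Tendsto f atTop (𝓝 0) := by
    refine squeeze_zero_norm' ?_ (Real.tendsto_exp_neg_atTop_nhds_zero)
    filter_upwards [Filter.eventually_ge_atTop (0:ℝ)] with t ht
    rw [hf, Real.norm_eq_abs, abs_div, abs_neg, abs_of_nonneg (Real.exp_pos _).le,
      abs_of_nonneg (by positivity)]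
    exact div_le_self (Real.exp_pos _).le (one_le_pow₀ (by linarith))
  have key := integral_Ioi_of_hasDerivAt_of_tendsto' hderiv hint htend
  have hf0 : f 0 = -1 := by simp [hf]
  rw [hf0] at key
  have hsplit : ∫ t in Ioi (0:ℝ), f' t =
      (∫ t in Ioi (0:ℝ), Real.exp (-t) / (1 + t) ^ (k+1)) +
      (k+1 : ℝ) * ∫ t in Ioi (0:ℝ), Real.exp (-t) / (1 + t) ^ (k+2) := by
    rw [hf', integral_add (intB k) ((intB (k+1)).const_mul _), integral_const_mul]
  rw [hsplit] at key
  linarith [key]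

lemma AeqB (k : ℕ) :
    ∫ x in Ioi (0:ℝ), x ^ k * Real.exp (-x) / (x + 1) =
      (k.factorial : ℝ) * ∫ t in Ioi (0:ℝ), Real.exp (-t) / (1 + t) ^ (k+1) := by
  induction k with
  | zero =>
    simp only [Nat.factorial_zero, Nat.cast_one, one_mul]
    refine setIntegral_congr_fun measurableSet_Ioi (fun x hx => ?_)
    rw [pow_one, pow_zero, one_mul, add_comm]
  | succ k ih =>
    have hrec : (∫ x in Ioi (0:ℝ), x ^ (k+1) * Real.exp (-x) / (x + 1)) +
        (∫ x in Ioi (0:ℝ), x ^ k * Real.exp (-x) / (x + 1)) = (k.factorial : ℝ) := by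
      rw [← integral_add (intA (k+1)) (intA k), ← valPow k]
      refine setIntegral_congr_fun measurableSet_Ioi (fun x hx => ?_)
      have hx0 : (0:ℝ) < x := hx
      have hne : x + 1 ≠ 0 := by positivity
      field_simp
      ring
    have hB := recB k
    have : ∫ x in Ioi (0:ℝ), x ^ (k+1) * Real.exp (-x) / (x + 1)
        = (k.factorial : ℝ) - (k.factorial : ℝ) * ∫ t in Ioi (0:ℝ), Real.exp (-t) / (1 + t) ^ (k+1) := by
      rw [← ih]; linarith
    rw [this]
    have : ((k+1).factorial : ℝ) = (k+1 : ℝ) * k.factorial := by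
      rw [Nat.factorial_succ]; push_cast; ring
    rw [this]
    nlinarith [hB]
lemma binom_id (r m : ℕ) (h : r ≤ m) (y : ℝ) :
    ∑ k ∈ Finset.Icc r m, (m.choose k : ℝ) * (k.choose r : ℝ) * (-1)^(k+r) * y^(m-k)
      = (m.choose r : ℝ) * (y - 1)^(m-r) := by
  rw [← Finset.Ico_add_one_right_eq_Icc, Finset.sum_Ico_eq_sum_range]
  have hn : m + 1 - r = (m - r) + 1 := by omega
  rw [hn]
  have hbin := add_pow (-1 : ℝ) y (m - r)
  have : (y - 1)^(m-r) = ∑ j ∈ Finset.range (m - r + 1),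
      (-1:ℝ)^j * y^(m-r-j) * ((m-r).choose j : ℝ) := by
    rw [show y - 1 = -1 + y by ring, hbin]
  rw [this, Finset.mul_sum]
  refine Finset.sum_congr rfl (fun j hj => ?_)
  rw [Finset.mem_range] at hj
  have hjle : j ≤ m - r := by omega
  have hchoose : (m.choose (r+j) : ℝ) * ((r+j).choose r : ℝ)
      = (m.choose r : ℝ) * ((m-r).choose j : ℝ) := by
    have := Nat.choose_mul (n := m) (k := r + j) (s := r) (by omega)
    have h2 : r + j - r = j := by omega
    rw [h2] at this
    exact_mod_cast congrArg (Nat.cast : ℕ → ℝ) this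
  have hsign : (-1:ℝ)^(r+j+r) = (-1:ℝ)^j := by
    rw [show r + j + r = j + 2*r by ring, pow_add, pow_mul]
    simp
  have hexp : m - (r + j) = m - r - j := by omega
  rw [hchoose, hsign, hexp]
  ring
lemma sum_to_integral (r m : ℕ) :
    ∑ k ∈ Finset.Icc r m,
        (m.choose k : ℝ) * (k.choose r : ℝ) * ((-1 : ℝ) ^ (k + r) / (Nat.factorial k : ℝ)) *
          ∫ x in Set.Ioi (0:ℝ), x ^ k * Real.exp (-x) / (x + 1)
      = (m.choose r : ℝ) *
          ∫ t in Set.Ioi (0:ℝ), Real.exp (-t) * t ^ (m - r) / (1 + t) ^ (m+1) := by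
  by_cases h : r ≤ m
  · have step1 : ∀ k ∈ Finset.Icc r m,
        (m.choose k : ℝ) * (k.choose r : ℝ) * ((-1 : ℝ) ^ (k + r) / (Nat.factorial k : ℝ)) *
          ∫ x in Set.Ioi (0:ℝ), x ^ k * Real.exp (-x) / (x + 1)
        = ∫ t in Set.Ioi (0:ℝ),
            (m.choose k : ℝ) * (k.choose r : ℝ) * (-1 : ℝ) ^ (k + r) *
              (Real.exp (-t) / (1 + t) ^ (k+1)) := by
      intro k _
      rw [AeqB k, integral_const_mul]
      have hk : (Nat.factorial k : ℝ) ≠ 0 := by exact_mod_cast k.factorial_ne_zero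
      field_simp
    rw [Finset.sum_congr rfl step1, ← integral_finset_sum]
    · rw [← integral_const_mul]
      refine setIntegral_congr_fun measurableSet_Ioi (fun t ht => ?_)
      have ht0 : (0:ℝ) < t := ht
      have hne : (1 + t) ≠ 0 := by positivity
      have key := binom_id r m h (1 + t)
      have : ∑ k ∈ Finset.Icc r m,
          (m.choose k : ℝ) * (k.choose r : ℝ) * (-1 : ℝ) ^ (k + r) *
            (Real.exp (-t) / (1 + t) ^ (k+1))
          = (∑ k ∈ Finset.Icc r m,
              (m.choose k : ℝ) * (k.choose r : ℝ) * (-1)^(k+r) * (1+t)^(m-k))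
            * Real.exp (-t) / (1 + t) ^ (m+1) := by
        rw [Finset.sum_mul, Finset.sum_div]
        refine Finset.sum_congr rfl (fun k hk => ?_)
        rw [Finset.mem_Icc] at hk
        have hpow : (1+t)^(m-k) * (1+t)^(k+1) = (1+t)^(m+1) := by
          rw [← pow_add]; congr 1; omega
        field_simp
        rw [← hpow]
        ring
      rw [this, key]
      have : (1 + t - 1 : ℝ) = t := by ring
      rw [this]
      ring
    · intro k _
      exact ((intB k).const_mul _)
  · have h1 : Finset.Icc r m = ∅ := by
      rw [Finset.Icc_eq_empty_iff]; omega
    have h2 : (m.choose r : ℝ) = 0 := by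
      rw [Nat.choose_eq_zero_of_lt (by omega)]; norm_num
    rw [h1, h2, Finset.sum_empty, zero_mul]
lemma pow_exp_bound (r : ℕ) {u : ℝ} (hu : 0 ≤ u) : u^r * Real.exp (-u) ≤ (r:ℝ)^r := by
  rcases Nat.eq_zero_or_pos r with hr | hr
  · subst hr
    simpa using Real.exp_le_one_iff.mpr (by linarith : -u ≤ 0)
  · have hrR : (0:ℝ) < r := by exact_mod_cast hr
    have h1 : u ≤ (r:ℝ) * Real.exp (u / r) := by
      have := Real.add_one_le_exp (u / r)
      have h2 : u / r ≤ Real.exp (u / r) := by linarith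
      calc u = (r:ℝ) * (u / r) := by field_simp
      _ ≤ (r:ℝ) * Real.exp (u / r) := by nlinarith
    have h3 : u ^ r ≤ ((r:ℝ) * Real.exp (u / r)) ^ r := pow_le_pow_left₀ hu h1 r
    have h4 : ((r:ℝ) * Real.exp (u / r)) ^ r = (r:ℝ)^r * Real.exp u := by
      rw [mul_pow, ← Real.exp_nat_mul]
      congr 2
      field_simp
    rw [h4] at h3
    calc u^r * Real.exp (-u) ≤ ((r:ℝ)^r * Real.exp u) * Real.exp (-u) := by
          exact mul_le_mul_of_nonneg_right h3 (Real.exp_pos _).le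
    _ = (r:ℝ)^r := by rw [mul_assoc, ← Real.exp_add]; simp

lemma nqn_bound (r n : ℕ) {t : ℝ} (ht : 0 < t) :
    (n:ℝ)^r * (t/(1+t))^n ≤ (r:ℝ)^r * (1+t)^r := by
  have h1t : (0:ℝ) < 1 + t := by linarith
  set s : ℝ := 1/(1+t) with hs
  have hs0 : 0 < s := by positivity
  have hq : t/(1+t) = 1 - s := by rw [hs]; field_simp; ring
  have hqe : t/(1+t) ≤ Real.exp (-s) := by
    rw [hq]
    have := Real.add_one_le_exp (-s)
    linarith
  have hq0 : (0:ℝ) ≤ t/(1+t) := by positivity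
  have hqn : (t/(1+t))^n ≤ Real.exp (-((n:ℝ)*s)) := by
    calc (t/(1+t))^n ≤ (Real.exp (-s))^n := pow_le_pow_left₀ hq0 hqe n
    _ = Real.exp (-((n:ℝ)*s)) := by rw [← Real.exp_nat_mul]; ring_nf
  have hns : (0:ℝ) ≤ (n:ℝ)*s := by positivity
  have hb := pow_exp_bound r hns
  have hkey : (n:ℝ)^r * Real.exp (-((n:ℝ)*s)) * s^r ≤ (r:ℝ)^r := by
    calc (n:ℝ)^r * Real.exp (-((n:ℝ)*s)) * s^r
        = ((n:ℝ)*s)^r * Real.exp (-((n:ℝ)*s)) := by rw [mul_pow]; ring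
    _ ≤ (r:ℝ)^r := hb
  have hsr : s^r = ((1+t)^r)⁻¹ := by
    rw [hs, div_pow, one_pow, one_div]
  have step : (n:ℝ)^r * (t/(1+t))^n ≤ (n:ℝ)^r * Real.exp (-((n:ℝ)*s)) := by
    exact mul_le_mul_of_nonneg_left hqn (by positivity)
  have h2 : (n:ℝ)^r * Real.exp (-((n:ℝ)*s)) ≤ (r:ℝ)^r * (1+t)^r := by
    have hpos : (0:ℝ) < s^r := by positivity
    rw [← mul_le_mul_iff_of_pos_right hpos]
    calc (n:ℝ)^r * Real.exp (-((n:ℝ)*s)) * s^r ≤ (r:ℝ)^r := hkey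
    _ = (r:ℝ)^r * (1+t)^r * s^r := by
        rw [hsr]
        field_simp
  linarith
lemma key_tendsto (r : ℕ) :
    Tendsto (fun m : ℕ => (m.choose r : ℝ) *
        ∫ t in Ioi (0:ℝ), Real.exp (-t) * t ^ (m - r) / (1 + t) ^ (m+1))
      atTop (𝓝 0) := by
  have hrw : ∀ m : ℕ, (m.choose r : ℝ) *
        ∫ t in Ioi (0:ℝ), Real.exp (-t) * t ^ (m - r) / (1 + t) ^ (m+1)
      = ∫ t in Ioi (0:ℝ),
          (m.choose r : ℝ) * (Real.exp (-t) * t ^ (m - r) / (1 + t) ^ (m+1)) := by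
    intro m; rw [integral_const_mul]
  simp only [hrw]
  have H := tendsto_integral_filter_of_dominated_convergence (l := atTop)
    (μ := volume.restrict (Ioi (0:ℝ)))
    (F := fun (m : ℕ) (t : ℝ) => (m.choose r : ℝ) * (Real.exp (-t) * t ^ (m - r) / (1 + t) ^ (m+1)))
    (f := fun _ : ℝ => (0:ℝ))
    (bound := fun t => (2^r * (r:ℝ)^r) * Real.exp (-t)) ?_ ?_ ?_ ?_
  · simpa using H
  · filter_upwards with m
    refine (Measurable.aestronglyMeasurable ?_)
    exact measurable_const.mul (((measurable_exp.comp measurable_neg).mul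
      (measurable_id.pow_const _)).div ((measurable_const.add measurable_id).pow_const _))
  · filter_upwards [Filter.eventually_ge_atTop (2*r)] with m hm
    filter_upwards [self_mem_ae_restrict measurableSet_Ioi] with t ht
    have ht0 : (0:ℝ) < t := ht
    have h1t : (0:ℝ) < 1 + t := by linarith
    have hFnn : (0:ℝ) ≤ (m.choose r : ℝ) * (Real.exp (-t) * t ^ (m - r) / (1 + t) ^ (m+1)) := by
      positivity
    rw [Real.norm_eq_abs, abs_of_nonneg hFnn]
    have hc1 : (m.choose r : ℝ) ≤ (m:ℝ)^r := by
      exact_mod_cast Nat.choose_le_pow m r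
    have hc2 : (m:ℝ)^r ≤ 2^r * ((m - r : ℕ):ℝ)^r := by
      rw [← mul_pow]
      refine pow_le_pow_left₀ (by positivity) ?_ r
      have h1 : ((m - r : ℕ):ℝ) = (m:ℝ) - r := by
        have : r ≤ m := by omega
        push_cast [this]; ring
      rw [h1]
      have h2 : (2*r : ℕ) ≤ m := hm
      have := (Nat.cast_le (α := ℝ)).mpr h2
      push_cast at this
      linarith
    have hsplit : t ^ (m - r) / (1 + t) ^ (m+1)
        = (t/(1+t)) ^ (m - r) / (1 + t) ^ (r+1) := by
      rw [div_pow, div_div, ← pow_add]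
      congr 2
      omega
    have hnqn := nqn_bound r (m - r) ht0
    have hq0 : (0:ℝ) ≤ t/(1+t) := by positivity
    calc (m.choose r : ℝ) * (Real.exp (-t) * t ^ (m - r) / (1 + t) ^ (m+1))
        = (m.choose r : ℝ) * Real.exp (-t) * ((t/(1+t)) ^ (m - r) / (1 + t) ^ (r+1)) := by
          rw [mul_div_assoc, hsplit]; ring
      _ ≤ (2^r * ((m - r : ℕ):ℝ)^r) * Real.exp (-t) * ((t/(1+t)) ^ (m - r) / (1 + t) ^ (r+1)) := by
          gcongr
          exact hc1.trans hc2
      _ = 2^r * Real.exp (-t) * ((((m - r : ℕ):ℝ)^r * (t/(1+t)) ^ (m - r)) / (1 + t) ^ (r+1)) := by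
          ring
      _ ≤ 2^r * Real.exp (-t) * (((r:ℝ)^r * (1+t)^r) / (1 + t) ^ (r+1)) := by
          gcongr
      _ = (2^r * (r:ℝ)^r) * Real.exp (-t) * ((1+t)^r / (1 + t) ^ (r+1)) := by ring
      _ ≤ (2^r * (r:ℝ)^r) * Real.exp (-t) * 1 := by
          gcongr
          rw [div_le_one (by positivity)]
          exact pow_le_pow_right₀ (by linarith) (by omega)
      _ = (2^r * (r:ℝ)^r) * Real.exp (-t) := by ring
  · exact (intExpNeg.const_mul _)
  · filter_upwards [self_mem_ae_restrict measurableSet_Ioi] with t ht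
    have ht0 : (0:ℝ) < t := ht
    have h1t : (0:ℝ) < 1 + t := by linarith
    have hq0 : (0:ℝ) < t/(1+t) := by positivity
    have hq1 : t/(1+t) < 1 := by
      rw [div_lt_one h1t]; linarith
    have hg : Tendsto (fun m : ℕ => Real.exp (-t) / (t/(1+t))^r * ((m:ℝ)^r * (t/(1+t))^m))
        atTop (𝓝 0) := by
      simpa using (tendsto_pow_const_mul_const_pow_of_lt_one r hq0.le hq1).const_mul
        (Real.exp (-t) / (t/(1+t))^r)
    refine squeeze_zero' ?_ ?_ hg
    · filter_upwards with m
      positivity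
    · filter_upwards [Filter.eventually_ge_atTop r] with m hm
      have hc1 : (m.choose r : ℝ) ≤ (m:ℝ)^r := by exact_mod_cast Nat.choose_le_pow m r
      have hsplit : t ^ (m - r) / (1 + t) ^ (m+1) ≤ (t/(1+t)) ^ (m - r) := by
        rw [div_pow]
        refine div_le_div_of_nonneg_left (by positivity) (by positivity) ?_
        exact pow_le_pow_right₀ (by linarith) (by omega)
      have hqmr : (t/(1+t)) ^ (m - r) = (t/(1+t))^m / (t/(1+t))^r := by
        rw [eq_div_iff (pow_ne_zero _ (ne_of_gt hq0)), ← pow_add]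
        congr 1
        omega
      calc (m.choose r : ℝ) * (Real.exp (-t) * t ^ (m - r) / (1 + t) ^ (m+1))
          ≤ (m:ℝ)^r * (Real.exp (-t) * (t/(1+t)) ^ (m - r)) := by
            rw [mul_div_assoc]
            refine mul_le_mul hc1 (mul_le_mul_of_nonneg_left hsplit (Real.exp_pos _).le)
              (by positivity) (by positivity)
        _ = Real.exp (-t) / (t/(1+t))^r * ((m:ℝ)^r * (t/(1+t))^m) := by
            rw [hqmr]; field_simp

theorem stmt17 (r : ℕ) :
    Tendsto
      (fun m : ℕ =>
        ∑ k ∈ Finset.Icc r m,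
          (m.choose k : ℝ) * (k.choose r : ℝ) * ((-1 : ℝ) ^ (k + r) / (Nat.factorial k : ℝ)) *
            ∫ x in Set.Ioi (0:ℝ), x ^ k * Real.exp (-x) / (x + 1))
      atTop (nhds 0) :=
  Filter.Tendsto.congr (fun m => (sum_to_integral r m).symm) (key_tendsto r)
end
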